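/- Let Cay²(A;G;B) be a left/right Cayley complex with |A| = |B| = r which is a λ-expander (both Cay(A;G) and Cay(G;B) are λ-expanders), and let C₁ ≤ F_2^r be a code. Then the left/right Cayley expander code C = C[G,A,B,C₁] ≤ F_2^S has rate ρ(C) ≥ 4ρ(C₁) − 3. -/

import Mathlib

open Finset

/-- The square `[a,g,b]` of the left/right Cayley complex, as the set of its four
(representative) triples. -/
def cSquare {G : Type*} [Group G] [DecidableEq G] (a g b : G) : Finset (G × G × G) :=
  {(a, g, b), (a⁻¹, a * g, b), (a⁻¹, a * g * b, b⁻¹), (a, g * b, b⁻¹)}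

lemma cSquare_left {G : Type*} [Group G] [DecidableEq G] (a g b : G) :
    cSquare a⁻¹ (a * g) b = cSquare a g b := by
  ext x
  simp only [cSquare, Finset.mem_insert, Finset.mem_singleton, inv_inv,
    inv_mul_cancel_left]
  tauto

lemma cSquare_right {G : Type*} [Group G] [DecidableEq G] (a g b : G) :
    cSquare a (g * b) b⁻¹ = cSquare a g b := by
  ext x
  simp only [cSquare, Finset.mem_insert, Finset.mem_singleton, inv_inv,
    mul_assoc, mul_inv_cancel, mul_one]
  tauto

lemma dim_aux {F U V W : Type*} [Field F] [AddCommGroup U] [Module F U]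
    [AddCommGroup V] [Module F V] [AddCommGroup W] [Module F W]
    [FiniteDimensional F U] [FiniteDimensional F V] [FiniteDimensional F W]
    (Ψ : U →ₗ[F] V) (hΨ : Function.Injective Ψ) (Θ : U →ₗ[F] W)
    (C : Submodule F V) (hc : ∀ u, Θ u = 0 → Ψ u ∈ C) :
    Module.finrank F U ≤ Module.finrank F C + Module.finrank F W := by
  have h1 := LinearMap.finrank_range_add_finrank_ker Θ
  have h2 : Module.finrank F (LinearMap.ker Θ) ≤ Module.finrank F C := by
    rw [LinearEquiv.finrank_eq (Submodule.equivMapOfInjective Ψ hΨ (LinearMap.ker Θ))]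
    apply Submodule.finrank_mono
    rintro v hv
    rw [Submodule.mem_map] at hv
    obtain ⟨u, hu, rfl⟩ := hv
    exact hc u hu
  have h3 : Module.finrank F (LinearMap.range Θ) ≤ Module.finrank F W :=
    Submodule.finrank_le _
  omega

lemma cSquare_card_le {G : Type*} [Group G] [DecidableEq G] (a g b : G) :
    (cSquare a g b).card ≤ 4 := by
  have h1 := Finset.card_insert_le (α := G × G × G) (a, g, b)
    {(a⁻¹, a * g, b), (a⁻¹, a * g * b, b⁻¹), (a, g * b, b⁻¹)}
  have h2 := Finset.card_insert_le (α := G × G × G) (a⁻¹, a * g, b)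
    {(a⁻¹, a * g * b, b⁻¹), (a, g * b, b⁻¹)}
  have h3 := Finset.card_insert_le (α := G × G × G) (a⁻¹, a * g * b, b⁻¹)
    {(a, g * b, b⁻¹)}
  have h4 : ({(a, g * b, b⁻¹)} : Finset (G × G × G)).card = 1 := Finset.card_singleton _
  unfold cSquare
  omega

lemma edgeL_eq {G : Type*} [Group G] [DecidableEq G] {A : Finset G} (h1A : (1 : G) ∉ A)
    (p q : ↥A × G) (hpq : ({p.2, (p.1 : G) * p.2} : Finset G) = {q.2, (q.1 : G) * q.2}) :
    q = p ∨ ((q.1 : G) = (p.1 : G)⁻¹ ∧ q.2 = (p.1 : G) * p.2) := by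
  obtain ⟨a, g⟩ := p
  obtain ⟨a', g'⟩ := q
  simp only at hpq ⊢
  have hne : ∀ c : ↥A, (c : G) ≠ 1 := fun c hc => h1A (hc ▸ c.2)
  have h1 : g' = g ∨ g' = (a : G) * g := by
    have : g' ∈ ({g, (a : G) * g} : Finset G) := hpq ▸ Finset.mem_insert_self _ _
    simpa using this
  have h2 : (a' : G) * g' = g ∨ (a' : G) * g' = (a : G) * g := by
    have : (a' : G) * g' ∈ ({g, (a : G) * g} : Finset G) := by
      rw [hpq]; exact Finset.mem_insert_of_mem (Finset.mem_singleton_self _)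
    simpa using this
  rcases h1 with h1 | h1
  · subst h1
    rcases h2 with h2 | h2
    · exact absurd (mul_right_cancel (h2.trans (one_mul g').symm)) (hne a')
    · left
      have : a' = a := Subtype.ext (mul_right_cancel h2)
      rw [this]
  · subst h1
    rcases h2 with h2 | h2
    · right
      refine ⟨?_, rfl⟩
      have hg : (a' : G) * (a : G) * g = 1 * g := by
        rw [one_mul, mul_assoc]; exact h2
      exact eq_inv_of_mul_eq_one_left (mul_right_cancel hg)
    · exact absurd (mul_right_cancel (h2.trans (one_mul ((a : G) * g)).symm)) (hne a')

lemma edgeR_eq {G : Type*} [Group G] [DecidableEq G] {B : Finset G} (h1B : (1 : G) ∉ B)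
    (p q : G × ↥B) (hpq : ({p.1, p.1 * (p.2 : G)} : Finset G) = {q.1, q.1 * (q.2 : G)}) :
    q = p ∨ (q.1 = p.1 * (p.2 : G) ∧ (q.2 : G) = (p.2 : G)⁻¹) := by
  obtain ⟨g, b⟩ := p
  obtain ⟨g', b'⟩ := q
  simp only at hpq ⊢
  have hne : ∀ c : ↥B, (c : G) ≠ 1 := fun c hc => h1B (hc ▸ c.2)
  have h1 : g' = g ∨ g' = g * (b : G) := by
    have : g' ∈ ({g, g * (b : G)} : Finset G) := hpq ▸ Finset.mem_insert_self _ _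
    simpa using this
  have h2 : g' * (b' : G) = g ∨ g' * (b' : G) = g * (b : G) := by
    have : g' * (b' : G) ∈ ({g, g * (b : G)} : Finset G) := by
      rw [hpq]; exact Finset.mem_insert_of_mem (Finset.mem_singleton_self _)
    simpa using this
  rcases h1 with h1 | h1
  · subst h1
    rcases h2 with h2 | h2
    · exact absurd (mul_left_cancel (h2.trans (mul_one g').symm)) (hne b')
    · left
      have : b' = b := Subtype.ext (mul_left_cancel h2)
      rw [this]
  · subst h1
    rcases h2 with h2 | h2
    · right
      refine ⟨rfl, ?_⟩
      have hg : g * ((b : G) * (b' : G)) = g * 1 := by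
        rw [mul_one, ← mul_assoc]; exact h2
      exact (inv_eq_of_mul_eq_one_right (mul_left_cancel hg)).symm
    · exact absurd (mul_left_cancel (h2.trans (mul_one (g * (b : G))).symm)) (hne b')

set_option maxHeartbeats 1000000 in
/-- **Rate of left/right Cayley expander codes:** `ρ(C) ≥ 4ρ(C₁) − 3`.  The code is
modeled as the submodule of functions `f : A × G × B → F₂` invariant under the square
identifications whose local view along every (left and right) edge lies in `C₁`; its
block length is the number of squares `|S|`. -/
theorem stmt10 {G : Type*} [Group G] [Fintype G] [DecidableEq G]
    (A B : Finset G) (r : ℕ) (hcA : A.card = r) (hcB : B.card = r)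
    (hAsym : ∀ a ∈ A, a⁻¹ ∈ A) (hBsym : ∀ b ∈ B, b⁻¹ ∈ B)
    (h1A : (1 : G) ∉ A) (h1B : (1 : G) ∉ B)
    (lam : ℝ)
    (hexpA : ∀ h : G → ℝ, ∑ g, h g = 0 →
      ∑ g, h g * ∑ a ∈ A, h (a * g) ≤ lam * r * ∑ g, h g ^ 2)
    (hexpB : ∀ h : G → ℝ, ∑ g, h g = 0 →
      ∑ g, h g * ∑ b ∈ B, h (g * b) ≤ lam * r * ∑ g, h g ^ 2)
    (ea : ↥A ≃ Fin r) (eb : ↥B ≃ Fin r)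
    (invA : ↥A ≃ ↥A) (hinvA : ∀ a : ↥A, ((invA a : G)) = (a : G)⁻¹)
    (invB : ↥B ≃ ↥B) (hinvB : ∀ b : ↥B, ((invB b : G)) = (b : G)⁻¹)
    (C1 : Submodule (ZMod 2) (Fin r → ZMod 2))
    (C : Submodule (ZMod 2) (↥A × G × ↥B → ZMod 2))
    (hC : ∀ f : ↥A × G × ↥B → ZMod 2, f ∈ C ↔
      ((∀ (a : ↥A) (g : G) (b : ↥B),
          f (a, g, b) = f (invA a, (a : G) * g, b) ∧
          f (a, g, b) = f (a, g * (b : G), invB b)) ∧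
       ((∀ (a : ↥A) (g : G), (fun i : Fin r => f (a, g, eb.symm i)) ∈ C1) ∧
        (∀ (g : G) (b : ↥B), (fun i : Fin r => f (ea.symm i, g, b)) ∈ C1)))) :
    (4 * ((Module.finrank (ZMod 2) C1 : ℝ) / r) - 3) *
        (((A ×ˢ (univ : Finset G) ×ˢ B).image fun t => cSquare t.1 t.2.1 t.2.2).card : ℝ)
      ≤ (Module.finrank (ZMod 2) C : ℝ) := by
  classical
  set S : Finset (Finset (G × G × G)) :=
    (A ×ˢ (univ : Finset G) ×ˢ B).image fun t => cSquare t.1 t.2.1 t.2.2 with hSdef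
  -- trivial case r = 0
  by_cases hr0 : r = 0
  · subst hr0
    have hA0 : A = ∅ := Finset.card_eq_zero.mp hcA
    have hS0 : S = ∅ := by rw [hSdef, hA0]; simp
    rw [hS0]
    simp
  -- membership of squares
  have hmemS : ∀ (a : ↥A) (g : G) (b : ↥B), cSquare (a : G) g (b : G) ∈ S := by
    intro a g b
    rw [hSdef]
    exact Finset.mem_image.mpr ⟨((a : G), g, (b : G)),
      by simp [Finset.mem_product, a.2, b.2], rfl⟩
  -- the linear map from functions on squares to functions on triples
  let Ψ : (↥S → ZMod 2) →ₗ[ZMod 2] (↥A × G × ↥B → ZMod 2) :=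
    { toFun := fun h t => h ⟨cSquare (t.1 : G) t.2.1 (t.2.2 : G), hmemS t.1 t.2.1 t.2.2⟩
      map_add' := fun _ _ => rfl
      map_smul' := fun _ _ => rfl }
  have hΨinj : Function.Injective Ψ := by
    intro x y hxy
    funext Q
    obtain ⟨t, htmem, htsq⟩ := Finset.mem_image.mp Q.2
    simp only [Finset.mem_product] at htmem
    have hx := congrFun hxy (⟨t.1, htmem.1⟩, t.2.1, ⟨t.2.2, htmem.2.2⟩)
    have hQ : (⟨cSquare t.1 t.2.1 t.2.2, hmemS ⟨t.1, htmem.1⟩ t.2.1 ⟨t.2.2, htmem.2.2⟩⟩ : ↥S) = Q :=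
      Subtype.ext htsq
    rw [← hQ]
    exact hx
  -- edges
  let edgeA : ↥A × G → Finset G := fun p => {p.2, (p.1 : G) * p.2}
  let EA : Finset (Finset G) := Finset.image edgeA Finset.univ
  let edgeB : G × ↥B → Finset G := fun p => {p.1, p.1 * (p.2 : G)}
  let EB : Finset (Finset G) := Finset.image edgeB Finset.univ
  have hrepA : ∀ e : ↥EA, ∃ p : ↥A × G, edgeA p = (e : Finset G) := by
    intro e
    obtain ⟨p, -, hp⟩ := Finset.mem_image.mp e.2
    exact ⟨p, hp⟩
  let repA : ↥EA → ↥A × G := fun e => (hrepA e).choose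
  have hrepA' : ∀ e, edgeA (repA e) = (e : Finset G) := fun e => (hrepA e).choose_spec
  have hrepB : ∀ e : ↥EB, ∃ p : G × ↥B, edgeB p = (e : Finset G) := by
    intro e
    obtain ⟨p, -, hp⟩ := Finset.mem_image.mp e.2
    exact ⟨p, hp⟩
  let repB : ↥EB → G × ↥B := fun e => (hrepB e).choose
  have hrepB' : ∀ e, edgeB (repB e) = (e : Finset G) := fun e => (hrepB e).choose_spec
  -- local view (row) maps
  let rowA : ↥A × G → ((↥S → ZMod 2) →ₗ[ZMod 2] (Fin r → ZMod 2)) := fun p =>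
    LinearMap.pi fun i => (LinearMap.proj (p.1, p.2, eb.symm i) :
      (↥A × G × ↥B → ZMod 2) →ₗ[ZMod 2] ZMod 2).comp Ψ
  let rowB : G × ↥B → ((↥S → ZMod 2) →ₗ[ZMod 2] (Fin r → ZMod 2)) := fun p =>
    LinearMap.pi fun i => (LinearMap.proj (ea.symm i, p.1, p.2) :
      (↥A × G × ↥B → ZMod 2) →ₗ[ZMod 2] ZMod 2).comp Ψ
  have rowA_eq : ∀ p q : ↥A × G, edgeA p = edgeA q → ∀ h, rowA p h = rowA q h := by
    intro p q hpq h
    rcases edgeL_eq h1A p q hpq with rfl | ⟨h1, h2⟩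
    · rfl
    · funext i
      refine congrArg h (Subtype.ext ?_)
      show cSquare (p.1 : G) p.2 ((eb.symm i : ↥B) : G)
          = cSquare (q.1 : G) q.2 ((eb.symm i : ↥B) : G)
      rw [h1, h2, cSquare_left]
  have rowB_eq : ∀ p q : G × ↥B, edgeB p = edgeB q → ∀ h, rowB p h = rowB q h := by
    intro p q hpq h
    rcases edgeR_eq h1B p q hpq with rfl | ⟨h1, h2⟩
    · rfl
    · funext i
      refine congrArg h (Subtype.ext ?_)
      show cSquare ((ea.symm i : ↥A) : G) p.1 (p.2 : G)
          = cSquare ((ea.symm i : ↥A) : G) q.1 (q.2 : G)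
      rw [h1, h2, cSquare_right]
  -- the constraint map
  let Quot1 := (Fin r → ZMod 2) ⧸ C1
  let ΘA : (↥S → ZMod 2) →ₗ[ZMod 2] (↥EA → Quot1) :=
    LinearMap.pi fun e => C1.mkQ.comp (rowA (repA e))
  let ΘB : (↥S → ZMod 2) →ₗ[ZMod 2] (↥EB → Quot1) :=
    LinearMap.pi fun e => C1.mkQ.comp (rowB (repB e))
  let Θ := ΘA.prod ΘB
  -- kernel of Θ maps into C
  have hker : ∀ h : ↥S → ZMod 2, Θ h = 0 → Ψ h ∈ C := by
    intro h hh
    have hhA : ∀ e : ↥EA, C1.mkQ (rowA (repA e) h) = 0 := by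
      intro e
      exact congrFun (congrArg Prod.fst hh) e
    have hhB : ∀ e : ↥EB, C1.mkQ (rowB (repB e) h) = 0 := by
      intro e
      exact congrFun (congrArg Prod.snd hh) e
    have hArow : ∀ p : ↥A × G, rowA p h ∈ C1 := by
      intro p
      have hmem : edgeA p ∈ EA := Finset.mem_image_of_mem _ (Finset.mem_univ p)
      have h0 := hhA ⟨edgeA p, hmem⟩
      rw [rowA_eq (repA ⟨edgeA p, hmem⟩) p (hrepA' ⟨edgeA p, hmem⟩) h] at h0
      rwa [Submodule.mkQ_apply, Submodule.Quotient.mk_eq_zero] at h0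
    have hBrow : ∀ p : G × ↥B, rowB p h ∈ C1 := by
      intro p
      have hmem : edgeB p ∈ EB := Finset.mem_image_of_mem _ (Finset.mem_univ p)
      have h0 := hhB ⟨edgeB p, hmem⟩
      rw [rowB_eq (repB ⟨edgeB p, hmem⟩) p (hrepB' ⟨edgeB p, hmem⟩) h] at h0
      rwa [Submodule.mkQ_apply, Submodule.Quotient.mk_eq_zero] at h0
    refine (hC (Ψ h)).mpr ⟨fun a g b => ⟨?_, ?_⟩, fun a g => hArow (a, g), fun g b => hBrow (g, b)⟩
    · refine congrArg h (Subtype.ext ?_)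
      show cSquare (a : G) g (b : G) = cSquare ((invA a : ↥A) : G) ((a : G) * g) (b : G)
      rw [hinvA, cSquare_left]
    · refine congrArg h (Subtype.ext ?_)
      show cSquare (a : G) g (b : G) = cSquare (a : G) (g * (b : G)) ((invB b : ↥B) : G)
      rw [hinvB, cSquare_right]
  -- dimension bound
  have main : Module.finrank (ZMod 2) (↥S → ZMod 2) ≤ Module.finrank (ZMod 2) C +
      Module.finrank (ZMod 2) ((↥EA → Quot1) × (↥EB → Quot1)) :=
    dim_aux Ψ hΨinj Θ C hker
  -- finrank computations
  set q : ℕ := Module.finrank (ZMod 2) Quot1 with hq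
  have hqk : q + Module.finrank (ZMod 2) C1 = r := by
    rw [hq]
    have := Submodule.finrank_quotient_add_finrank C1
    rwa [Module.finrank_fintype_fun_eq_card, Fintype.card_fin] at this
  have dU : Module.finrank (ZMod 2) (↥S → ZMod 2) = S.card := by
    rw [Module.finrank_fintype_fun_eq_card, Fintype.card_coe]
  have dW : Module.finrank (ZMod 2) ((↥EA → Quot1) × (↥EB → Quot1))
      = EA.card * q + EB.card * q := by
    rw [Module.finrank_prod, Module.finrank_pi_fintype, Module.finrank_pi_fintype]
    simp [Finset.card_univ, Fintype.card_coe, mul_comm]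
    rw [hq]
  have main2 : S.card ≤ Module.finrank (ZMod 2) C + (EA.card * q + EB.card * q) := by
    rw [← dU, ← dW]; exact main
  -- counting squares: r * |G| * r ≤ 4 * |S|
  have countS : r * Fintype.card G * r ≤ 4 * S.card := by
    have hfib : ∀ Q ∈ (A ×ˢ (univ : Finset G) ×ˢ B).image
        (fun t : G × G × G => cSquare t.1 t.2.1 t.2.2), ((A ×ˢ (univ : Finset G) ×ˢ B).filter
          (fun t : G × G × G => cSquare t.1 t.2.1 t.2.2 = Q)).card ≤ 4 := by
      intro Q hQ
      obtain ⟨u, -, hu⟩ := Finset.mem_image.mp hQ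
      calc ((A ×ˢ (univ : Finset G) ×ˢ B).filter
            (fun t : G × G × G => cSquare t.1 t.2.1 t.2.2 = Q)).card
          ≤ Q.card := by
            apply Finset.card_le_card
            intro t ht
            obtain ⟨-, ht2⟩ := Finset.mem_filter.mp ht
            have : t ∈ cSquare t.1 t.2.1 t.2.2 := Finset.mem_insert_self _ _
            rwa [ht2] at this
        _ ≤ 4 := by rw [← hu]; exact cSquare_card_le _ _ _
    have := Finset.card_le_mul_card_image (A ×ˢ (univ : Finset G) ×ˢ B) 4 hfib
    rw [Finset.card_product, Finset.card_product, hcA, hcB, Finset.card_univ] at this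
    calc r * Fintype.card G * r = r * (Fintype.card G * r) := by ring
      _ ≤ 4 * S.card := this
  -- counting edges
  have countA : 2 * EA.card ≤ r * Fintype.card G := by
    have hfib : ∀ e ∈ Finset.image edgeA Finset.univ,
        2 ≤ (Finset.univ.filter (fun p : ↥A × G => edgeA p = e)).card := by
      intro e he
      obtain ⟨p, -, hp⟩ := Finset.mem_image.mp he
      set p' : ↥A × G := (invA p.1, (p.1 : G) * p.2) with hp'
      have hpne : p ≠ p' := by
        intro hcon
        have h0 : p.2 = (p.1 : G) * p.2 := congrArg Prod.snd hcon
        have h1 : (p.1 : G) * p.2 = 1 * p.2 := by rw [one_mul]; exact h0.symm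
        exact h1A (mul_right_cancel h1 ▸ p.1.2)
      have hsub : ({p, p'} : Finset (↥A × G)) ⊆
          Finset.univ.filter (fun x : ↥A × G => edgeA x = e) := by
        intro x hx
        rcases Finset.mem_insert.mp hx with rfl | hx
        · exact Finset.mem_filter.mpr ⟨Finset.mem_univ _, hp⟩
        · rw [Finset.mem_singleton.mp hx]
          refine Finset.mem_filter.mpr ⟨Finset.mem_univ _, ?_⟩
          rw [← hp]
          show ({(p.1 : G) * p.2, ((invA p.1 : ↥A) : G) * ((p.1 : G) * p.2)} : Finset G)
            = ({p.2, (p.1 : G) * p.2} : Finset G)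
          rw [hinvA, inv_mul_cancel_left, Finset.pair_comm]
      calc 2 = ({p, p'} : Finset (↥A × G)).card := by
            rw [Finset.card_insert_of_notMem (by simpa using hpne), Finset.card_singleton]
        _ ≤ _ := Finset.card_le_card hsub
    have h2to1 : 2 * EA.card ≤ (Finset.univ : Finset (↥A × G)).card :=
      Finset.mul_card_image_le_card (f := edgeA) Finset.univ 2 hfib
    rwa [Finset.card_univ, Fintype.card_prod, Fintype.card_coe, hcA] at h2to1
  have countB : 2 * EB.card ≤ Fintype.card G * r := by
    have hfib : ∀ e ∈ Finset.image edgeB Finset.univ,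
        2 ≤ (Finset.univ.filter (fun p : G × ↥B => edgeB p = e)).card := by
      intro e he
      obtain ⟨p, -, hp⟩ := Finset.mem_image.mp he
      set p' : G × ↥B := (p.1 * (p.2 : G), invB p.2) with hp'
      have hpne : p ≠ p' := by
        intro hcon
        have h0 : p.1 = p.1 * (p.2 : G) := congrArg Prod.fst hcon
        have h1 : p.1 * (p.2 : G) = p.1 * 1 := by rw [mul_one]; exact h0.symm
        exact h1B (mul_left_cancel h1 ▸ p.2.2)
      have hsub : ({p, p'} : Finset (G × ↥B)) ⊆
          Finset.univ.filter (fun x : G × ↥B => edgeB x = e) := by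
        intro x hx
        rcases Finset.mem_insert.mp hx with rfl | hx
        · exact Finset.mem_filter.mpr ⟨Finset.mem_univ _, hp⟩
        · rw [Finset.mem_singleton.mp hx]
          refine Finset.mem_filter.mpr ⟨Finset.mem_univ _, ?_⟩
          rw [← hp]
          show ({p.1 * (p.2 : G), (p.1 * (p.2 : G)) * ((invB p.2 : ↥B) : G)} : Finset G)
            = ({p.1, p.1 * (p.2 : G)} : Finset G)
          rw [hinvB, mul_inv_cancel_right, Finset.pair_comm]
      calc 2 = ({p, p'} : Finset (G × ↥B)).card := by
            rw [Finset.card_insert_of_notMem (by simpa using hpne), Finset.card_singleton]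
        _ ≤ _ := Finset.card_le_card hsub
    have h2to1 : 2 * EB.card ≤ (Finset.univ : Finset (G × ↥B)).card :=
      Finset.mul_card_image_le_card (f := edgeB) Finset.univ 2 hfib
    rwa [Finset.card_univ, Fintype.card_prod, Fintype.card_coe, hcB] at h2to1
  -- real arithmetic
  have hrpos : (0 : ℝ) < r := by exact_mod_cast Nat.pos_of_ne_zero hr0
  have main2' : S.card ≤ Module.finrank (ZMod 2) C + (EA.card + EB.card) * q := by
    rw [add_mul]; exact main2
  have H3 : (S.card : ℝ) ≤ (Module.finrank (ZMod 2) C : ℝ)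
      + ((EA.card : ℝ) + (EB.card : ℝ)) * q := by exact_mod_cast main2'
  have HS : (r : ℝ) * (Fintype.card G : ℝ) * r ≤ 4 * S.card := by exact_mod_cast countS
  have HA : 2 * (EA.card : ℝ) ≤ r * (Fintype.card G : ℝ) := by exact_mod_cast countA
  have HB : 2 * (EB.card : ℝ) ≤ (Fintype.card G : ℝ) * r := by exact_mod_cast countB
  have hqr : (q : ℝ) + (Module.finrank (ZMod 2) C1 : ℝ) = r := by exact_mod_cast hqk
  have hq0 : (0 : ℝ) ≤ q := Nat.cast_nonneg _
  have hgoal : 4 * ((Module.finrank (ZMod 2) C1 : ℝ) / r) - 3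
      = (4 * (Module.finrank (ZMod 2) C1 : ℝ) - 3 * r) / r := by
    field_simp
  rw [hgoal, div_mul_eq_mul_div, div_le_iff₀ hrpos]
  have hk' : (Module.finrank (ZMod 2) C1 : ℝ) = r - q := by linarith
  rw [hk']
  have hEr : (r : ℝ) * ((EA.card : ℝ) + EB.card) ≤ 4 * S.card := by
    nlinarith [mul_le_mul_of_nonneg_left
      (by linarith : (EA.card : ℝ) + EB.card ≤ r * (Fintype.card G : ℝ)) hrpos.le]
  have t1 : (r : ℝ) * S.card ≤ r * (Module.finrank (ZMod 2) C : ℝ)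
      + r * (((EA.card : ℝ) + EB.card) * q) := by
    nlinarith [mul_le_mul_of_nonneg_left H3 hrpos.le]
  have t2 : (r : ℝ) * (((EA.card : ℝ) + EB.card) * q) ≤ 4 * S.card * q := by
    nlinarith [mul_le_mul_of_nonneg_right hEr hq0]
  nlinarith [t1, t2, mul_nonneg hq0 (Nat.cast_nonneg S.card : (0:ℝ) ≤ S.card)]
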